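/- Let α_n(b,b) = Σ 2^{dd(π)} over permutations of [n] with no double ascents whose descent word starts and ends with a descent. Then for all n ≥ 2, α_n(b,b) = ⌊n!/e + 1/2⌋, the nearest integer to n!/e. -/

import Mathlib

open Finset
open scoped Classical

/-- π has an ascent at position i (0-indexed): π_i < π_{i+1}. -/
def Asc {n : ℕ} (π : Equiv.Perm (Fin n)) (i : ℕ) : Prop :=
  ∃ h : i + 1 < n, π ⟨i, Nat.lt_of_succ_lt h⟩ < π ⟨i + 1, h⟩

/-- π has a descent at position i (0-indexed): π_i > π_{i+1}. -/
def Desc {n : ℕ} (π : Equiv.Perm (Fin n)) (i : ℕ) : Prop :=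
  ∃ h : i + 1 < n, π ⟨i + 1, h⟩ < π ⟨i, Nat.lt_of_succ_lt h⟩

/-- The number of double descents of π: positions i with π_i > π_{i+1} > π_{i+2}. -/
noncomputable def dd {n : ℕ} (π : Equiv.Perm (Fin n)) : ℕ :=
  ((Finset.range n).filter (fun i => Desc π i ∧ Desc π (i + 1))).card

/-- π has no double ascents: no i with π_i < π_{i+1} < π_{i+2}. -/
def NoDoubleAsc {n : ℕ} (π : Equiv.Perm (Fin n)) : Prop :=
  ∀ i : ℕ, ¬ (Asc π i ∧ Asc π (i + 1))

/-- α_n(b,b) = Σ 2^{dd(π)} over permutations of [n] with no double ascents whose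
descent word starts and ends with a descent. -/
noncomputable def alphaBB (n : ℕ) : ℕ :=
  ∑ π ∈ Finset.univ.filter
      (fun π : Equiv.Perm (Fin n) => NoDoubleAsc π ∧ Desc π 0 ∧ Desc π (n - 2)),
    2 ^ dd π

namespace AlphaBBAux

/-! ### Words (lists) and their descent statistics -/

/-- descent at letter position i (0-indexed): compares entries i and i+1. -/
def descL (l : List ℕ) (i : ℕ) : Prop :=
  i + 1 < l.length ∧ l.getD (i+1) 0 < l.getD i 0

def ascL (l : List ℕ) (i : ℕ) : Prop :=
  i + 1 < l.length ∧ l.getD i 0 < l.getD (i+1) 0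

def ddL (l : List ℕ) (i : ℕ) : Prop := descL l i ∧ descL l (i+1)

def noDA (l : List ℕ) : Prop := ∀ i : ℕ, ¬ (ascL l i ∧ ascL l (i+1))

/-- valid marked word -/
def Obj (l : List ℕ) (S : Finset ℕ) : Prop :=
  (l = [] ∧ S = ∅) ∨
  (descL l 0 ∧ descL l (l.length - 2) ∧ noDA l ∧ ∀ i ∈ S, ddL l i)

/-- the finset of valid marked words on the value set `V`. -/
noncomputable def OV (V : Finset ℕ) : Finset (List ℕ × Finset ℕ) :=
  (((V.sort (·≤·)).permutations.toFinset) ×ˢ (Finset.range V.card).powerset).filter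
    (fun p => Obj p.1 p.2)

lemma mem_OV_iff {V : Finset ℕ} {l : List ℕ} {S : Finset ℕ} :
    (l, S) ∈ OV V ↔ l.Nodup ∧ l.toFinset = V ∧ S ⊆ Finset.range V.card ∧ Obj l S := by
  constructor
  · intro h
    rw [OV, Finset.mem_filter, Finset.mem_product] at h
    obtain ⟨⟨h1, h2⟩, h3⟩ := h
    rw [List.mem_toFinset, List.mem_permutations] at h1
    have hnd : l.Nodup := h1.nodup_iff.mpr (Finset.sort_nodup _ _)
    refine ⟨hnd, ?_, by simpa using h2, h3⟩
    rw [← Finset.sort_toFinset V (·≤·)]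
    ext a; simp only [List.mem_toFinset]; exact h1.mem_iff
  · rintro ⟨h1, h2, h3, h4⟩
    rw [OV, Finset.mem_filter, Finset.mem_product]
    refine ⟨⟨?_, by simpa using h3⟩, h4⟩
    rw [List.mem_toFinset, List.mem_permutations]
    exact List.perm_of_nodup_nodup_toFinset_eq h1 (Finset.sort_nodup _ _)
      (by rw [h2, Finset.sort_toFinset])

lemma descL_not_ascL {l : List ℕ} {i : ℕ} (h : descL l i) : ¬ ascL l i := by
  rintro ⟨_, h2⟩; exact absurd h.2 (not_lt.2 h2.le)

lemma descL_of_not_ascL {l : List ℕ} {i : ℕ} (hnd : l.Nodup) (hlt : i + 1 < l.length)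
    (h : ¬ ascL l i) : descL l i := by
  have hne : l.getD i 0 ≠ l.getD (i+1) 0 := by
    rw [List.getD_eq_getElem l 0 (by omega : i < l.length), List.getD_eq_getElem l 0 hlt]
    simp [hnd.getElem_inj_iff]
  have h2 : ¬ l.getD i 0 < l.getD (i+1) 0 := fun hc => h ⟨hlt, hc⟩
  exact ⟨hlt, by omega⟩

lemma length_ge_two_of_obj {l : List ℕ} {S : Finset ℕ} (h : Obj l S) (hl : l ≠ []) :
    2 ≤ l.length := by
  rcases h with ⟨h, _⟩ | ⟨⟨h, _⟩, _⟩
  · exact absurd h hl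
  · omega

/-! ### drop/append transfer lemmas -/

lemma getD_drop {l : List ℕ} {k j : ℕ} : (l.drop k).getD j 0 = l.getD (k + j) 0 := by
  by_cases h : k + j < l.length
  · have hj : j < (l.drop k).length := by rw [List.length_drop]; omega
    rw [List.getD_eq_getElem _ 0 hj, List.getD_eq_getElem _ 0 h, List.getElem_drop]
  · rw [List.getD_eq_default _ _ (by rw [List.length_drop]; omega),
      List.getD_eq_default _ _ (by omega)]

lemma descL_drop {l : List ℕ} {k j : ℕ} (hk : k ≤ l.length) :
    descL (l.drop k) j ↔ descL l (k + j) := by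
  unfold descL
  rw [getD_drop, getD_drop, List.length_drop, Nat.add_succ]
  constructor
  · rintro ⟨h1, h2⟩; exact ⟨by omega, h2⟩
  · rintro ⟨h1, h2⟩; exact ⟨by omega, h2⟩

lemma ascL_drop {l : List ℕ} {k j : ℕ} (hk : k ≤ l.length) :
    ascL (l.drop k) j ↔ ascL l (k + j) := by
  unfold ascL
  rw [getD_drop, getD_drop, List.length_drop, Nat.add_succ]
  constructor
  · rintro ⟨h1, h2⟩; exact ⟨by omega, h2⟩
  · rintro ⟨h1, h2⟩; exact ⟨by omega, h2⟩

lemma getD_append_lt {c l' : List ℕ} {i : ℕ} (h : i < c.length) :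
    (c ++ l').getD i 0 = c.getD i 0 := by
  rw [List.getD_eq_getElem _ 0 (by rw [List.length_append]; omega), List.getD_eq_getElem _ 0 h,
    List.getElem_append_left h]

lemma getD_append_ge {c l' : List ℕ} {j : ℕ} :
    (c ++ l').getD (c.length + j) 0 = l'.getD j 0 := by
  by_cases hm : j < l'.length
  · rw [List.getD_eq_getElem _ 0 (by rw [List.length_append]; omega), List.getD_eq_getElem _ 0 hm,
      List.getElem_append_right (by omega)]
    congr 1; omega
  · rw [List.getD_eq_default _ _ (by rw [List.length_append]; omega),
      List.getD_eq_default _ _ (by omega)]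

lemma descL_append_left {c l' : List ℕ} {i : ℕ} (h : i + 1 < c.length) :
    descL (c ++ l') i ↔ descL c i := by
  unfold descL
  rw [getD_append_lt (show i + 1 < c.length from h),
    getD_append_lt (show i < c.length by omega), List.length_append]
  constructor
  · rintro ⟨_, h2⟩; exact ⟨h, h2⟩
  · rintro ⟨_, h2⟩; exact ⟨by omega, h2⟩

lemma ascL_append_left {c l' : List ℕ} {i : ℕ} (h : i + 1 < c.length) :
    ascL (c ++ l') i ↔ ascL c i := by
  unfold ascL
  rw [getD_append_lt (show i + 1 < c.length from h),
    getD_append_lt (show i < c.length by omega), List.length_append]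
  constructor
  · rintro ⟨_, h2⟩; exact ⟨h, h2⟩
  · rintro ⟨_, h2⟩; exact ⟨by omega, h2⟩

lemma descL_append_right {c l' : List ℕ} {j : ℕ} :
    descL (c ++ l') (c.length + j) ↔ descL l' j := by
  unfold descL
  rw [show c.length + j + 1 = c.length + (j+1) from by omega, getD_append_ge, getD_append_ge,
    List.length_append]
  constructor
  · rintro ⟨h1, h2⟩; exact ⟨by omega, h2⟩
  · rintro ⟨h1, h2⟩; exact ⟨by omega, h2⟩

lemma ascL_append_right {c l' : List ℕ} {j : ℕ} :
    ascL (c ++ l') (c.length + j) ↔ ascL l' j := by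
  unfold ascL
  rw [show c.length + j + 1 = c.length + (j+1) from by omega, getD_append_ge, getD_append_ge,
    List.length_append]
  constructor
  · rintro ⟨h1, h2⟩; exact ⟨by omega, h2⟩
  · rintro ⟨h1, h2⟩; exact ⟨by omega, h2⟩

/-- junction letter of a concatenation, c nonempty: compares last of c with head of l'. -/
lemma descL_append_junction {c l' : List ℕ} (hc : c ≠ []) :
    descL (c ++ l') (c.length - 1) ↔ (l' ≠ [] ∧ l'.getD 0 0 < c.getD (c.length - 1) 0) := by
  have hc1 : 1 ≤ c.length := List.length_pos_iff.mpr hc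
  have e1 : c.length - 1 + 1 = c.length := by omega
  unfold descL
  rw [e1]
  have e2 : (c ++ l').getD c.length 0 = l'.getD 0 0 := by
    simpa using (getD_append_ge (c := c) (l' := l') (j := 0))
  rw [e2, getD_append_lt (show c.length - 1 < c.length by omega), List.length_append]
  constructor
  · rintro ⟨h1, h2⟩
    refine ⟨fun he => by subst he; simp at h1, h2⟩
  · rintro ⟨h1, h2⟩
    have : 0 < l'.length := List.length_pos_iff.mpr h1
    exact ⟨by omega, h2⟩

lemma ascL_append_junction {c l' : List ℕ} (hc : c ≠ []) :
    ascL (c ++ l') (c.length - 1) ↔ (l' ≠ [] ∧ c.getD (c.length - 1) 0 < l'.getD 0 0) := by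
  have hc1 : 1 ≤ c.length := List.length_pos_iff.mpr hc
  have e1 : c.length - 1 + 1 = c.length := by omega
  unfold ascL
  rw [e1]
  have e2 : (c ++ l').getD c.length 0 = l'.getD 0 0 := by
    simpa using (getD_append_ge (c := c) (l' := l') (j := 0))
  rw [e2, getD_append_lt (show c.length - 1 < c.length by omega), List.length_append]
  constructor
  · rintro ⟨h1, h2⟩
    refine ⟨fun he => by subst he; simp at h1, h2⟩
  · rintro ⟨h1, h2⟩
    have : 0 < l'.length := List.length_pos_iff.mpr h1
    exact ⟨by omega, h2⟩

/-! ### decreasing sort of a finset -/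

noncomputable def sortDesc (T : Finset ℕ) : List ℕ := (T.sort (·≤·)).reverse

lemma sortDesc_length {T : Finset ℕ} : (sortDesc T).length = T.card := by
  simp [sortDesc]

lemma sortDesc_nodup {T : Finset ℕ} : (sortDesc T).Nodup := by
  simp [sortDesc]

lemma sortDesc_toFinset {T : Finset ℕ} : (sortDesc T).toFinset = T := by
  simp [sortDesc]

lemma sortDesc_sorted {T : Finset ℕ} : (sortDesc T).Pairwise (· > ·) := by
  rw [sortDesc, List.pairwise_reverse]
  exact (Finset.sortedLT_sort T).pairwise

lemma sortDesc_descL {T : Finset ℕ} {i : ℕ} (h : i + 1 < T.card) :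
    descL (sortDesc T) i := by
  have hs := sortDesc_sorted (T := T)
  rw [List.pairwise_iff_getElem] at hs
  have hl : (sortDesc T).length = T.card := sortDesc_length
  refine ⟨by omega, ?_⟩
  rw [List.getD_eq_getElem _ 0 (by omega), List.getD_eq_getElem _ 0 (by omega)]
  exact hs i (i+1) (by omega) (by omega) (by omega)

/-- a strictly decreasing word is the decreasing sort of its value set -/
lemma eq_sortDesc {c : List ℕ} (hnd : c.Nodup) (hs : c.Pairwise (· > ·)) :
    sortDesc c.toFinset = c := by
  haveI : Std.Antisymm (α := ℕ) (· > ·) := ⟨fun a b h1 h2 => absurd h1 (lt_asymm h2)⟩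
  refine List.Perm.eq_of_pairwise' sortDesc_sorted hs ?_
  exact List.perm_of_nodup_nodup_toFinset_eq sortDesc_nodup hnd (by rw [sortDesc_toFinset])

/-- a word all of whose letters are descents is sorted decreasingly -/
lemma sorted_of_all_descL {c : List ℕ} (h : ∀ i, i + 1 < c.length → descL c i) :
    c.Pairwise (· > ·) := by
  rw [List.pairwise_iff_getElem]
  intro i j hi hj hij
  induction j with
  | zero => omega
  | succ j ih =>
    have hd := (h j (by omega)).2
    rw [List.getD_eq_getElem _ 0 (by omega), List.getD_eq_getElem _ 0 (by omega)] at hd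
    rcases Nat.lt_or_ge i j with hij' | hij'
    · exact lt_trans hd (ih (by omega) hij')
    · have : i = j := by omega
      subst this; exact hd

/-! ### the decomposition maps -/

lemma exists_not_mem (S : Finset ℕ) : ∃ i, i ∉ S := by
  exact ⟨S.sup id + 1, fun h => Nat.not_succ_le_self _ (Finset.le_sup (f := id) h)⟩

/-- least index not in S -/
noncomputable def tt (S : Finset ℕ) : ℕ := Nat.find (exists_not_mem S)

lemma tt_not_mem {S : Finset ℕ} : tt S ∉ S := Nat.find_spec (exists_not_mem S)

lemma tt_mem {S : Finset ℕ} {i : ℕ} (h : i < tt S) : i ∈ S := by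
  by_contra hc
  have h2 : tt S ≤ i := Nat.find_le hc
  omega

def cutL (l : List ℕ) (S : Finset ℕ) (i : ℕ) : Prop := ascL l i ∨ i ∈ S

/-- end of the first superblock (as number of elements). -/
noncomputable def kk (l : List ℕ) (S : Finset ℕ) : ℕ :=
  if h : ∃ i, tt S ≤ i ∧ cutL l S i then Nat.find h + 1 else l.length

lemma kk_cases (l : List ℕ) (S : Finset ℕ) :
    (∃ h : ∃ i, tt S ≤ i ∧ cutL l S i, kk l S = Nat.find h + 1) ∨
      ((¬ ∃ i, tt S ≤ i ∧ cutL l S i) ∧ kk l S = l.length) := by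
  unfold kk
  split_ifs with h
  · exact Or.inl ⟨h, rfl⟩
  · exact Or.inr ⟨h, rfl⟩

section Struct

variable {l : List ℕ} {S : Finset ℕ}

lemma tt_add_two_le (h0 : descL l 0) (hS : ∀ i ∈ S, ddL l i) : tt S + 2 ≤ l.length := by
  rcases Nat.eq_zero_or_pos (tt S) with h | h
  · have := h0.1; omega
  · have hm : tt S - 1 ∈ S := tt_mem (by omega)
    have := ((hS _ hm).2).1
    omega

lemma not_cut_tt (h0 : descL l 0) (hS : ∀ i ∈ S, ddL l i) : ¬ cutL l S (tt S) := by
  rintro (ha | hm)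
  · rcases Nat.eq_zero_or_pos (tt S) with h | h
    · rw [h] at ha; exact descL_not_ascL h0 ha
    · have hm1 : tt S - 1 ∈ S := tt_mem (by omega)
      have hd : descL l (tt S) := by
        have h2 := (hS _ hm1).2
        have e : tt S - 1 + 1 = tt S := by omega
        rwa [e] at h2
      exact descL_not_ascL hd ha
  · exact tt_not_mem hm

lemma kk_le (hS : ∀ i ∈ S, ddL l i) : kk l S ≤ l.length := by
  rcases kk_cases l S with ⟨hex, hk⟩ | ⟨-, hk⟩
  · obtain ⟨-, hc⟩ := Nat.find_spec hex
    rcases hc with ha | hm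
    · have := ha.1; omega
    · have := (hS _ hm).1.1; omega
  · omega

lemma tt_add_two_le_kk (h0 : descL l 0) (hS : ∀ i ∈ S, ddL l i) : tt S + 2 ≤ kk l S := by
  rcases kk_cases l S with ⟨hex, hk⟩ | ⟨-, hk⟩
  · have h1 := Nat.find_spec hex
    have h2 : Nat.find hex ≠ tt S := fun he => not_cut_tt h0 hS (he ▸ h1.2)
    have h3 : tt S ≤ Nat.find hex := h1.1
    omega
  · have := tt_add_two_le h0 hS; omega

lemma no_cut_middle {i : ℕ} (hi : tt S ≤ i) (hik : i + 1 < kk l S) : ¬ cutL l S i := by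
  intro hc
  rcases kk_cases l S with ⟨hex, hk⟩ | ⟨hex, hk⟩
  · exact Nat.find_min hex (by omega) ⟨hi, hc⟩
  · exact hex ⟨i, hi, hc⟩

lemma take_descL_of (hnd : l.Nodup) (hS : ∀ i ∈ S, ddL l i) {i : ℕ}
    (hik : i + 1 < kk l S) : descL l i := by
  rcases Nat.lt_or_ge i (tt S) with h | h
  · exact (hS _ (tt_mem h)).1
  · have hnc := no_cut_middle h hik
    have hlen : i + 1 < l.length := lt_of_lt_of_le hik (kk_le hS)
    exact descL_of_not_ascL hnd hlen (fun ha => hnc (Or.inl ha))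

lemma kk_add_two_le (hend : descL l (l.length - 2)) (hS : ∀ i ∈ S, ddL l i)
    (h : kk l S < l.length) : kk l S + 2 ≤ l.length := by
  rcases kk_cases l S with ⟨hex, hk⟩ | ⟨-, hk⟩
  · obtain ⟨-, hc⟩ := Nat.find_spec hex
    rcases hc with ha | hm
    · have hb := ha.1
      have hne : Nat.find hex ≠ l.length - 2 := by
        intro he; rw [he] at ha; exact descL_not_ascL hend ha
      omega
    · have := (hS _ hm).2.1
      omega
  · omega

lemma descL_kk (hnd : l.Nodup) (hend : descL l (l.length - 2)) (hnoDA : noDA l)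
    (hS : ∀ i ∈ S, ddL l i) (h : kk l S < l.length) : descL l (kk l S) := by
  have h2 := kk_add_two_le hend hS h
  rcases kk_cases l S with ⟨hex, hk⟩ | ⟨-, hk⟩
  · obtain ⟨-, hc⟩ := Nat.find_spec hex
    rcases hc with ha | hm
    · refine descL_of_not_ascL hnd (by omega) (fun hb => hnoDA (Nat.find hex) ⟨ha, ?_⟩)
      rwa [show Nat.find hex + 1 = kk l S from by omega]
    · have := (hS _ hm).2
      rwa [show Nat.find hex + 1 = kk l S from by omega] at this
  · omega

lemma mark_cases (h0 : descL l 0) (hS : ∀ i ∈ S, ddL l i) {i : ℕ} (hi : i ∈ S) :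
    i < tt S ∨ i = kk l S - 1 ∨ kk l S ≤ i := by
  by_contra hc
  push_neg at hc
  obtain ⟨h1, h2, h3⟩ := hc
  have hk2 : tt S + 2 ≤ kk l S := tt_add_two_le_kk h0 hS
  exact no_cut_middle (l := l) (by omega) (by omega) (Or.inr hi)

lemma mark_kk_sub_one_iff (h0 : descL l 0) (hend : descL l (l.length - 2))
    (hS : ∀ i ∈ S, ddL l i) :
    kk l S - 1 ∈ S ↔ (kk l S < l.length ∧ descL l (kk l S - 1)) := by
  have hk2 : tt S + 2 ≤ kk l S := tt_add_two_le_kk h0 hS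
  constructor
  · intro hm
    have d2 := (hS _ hm).2
    rw [show kk l S - 1 + 1 = kk l S from by omega] at d2
    exact ⟨by have := d2.1; omega, (hS _ hm).1⟩
  · rintro ⟨hlt, hd⟩
    rcases kk_cases l S with ⟨hex, hk⟩ | ⟨-, hk⟩
    · obtain ⟨-, hc⟩ := Nat.find_spec hex
      have e : Nat.find hex = kk l S - 1 := by omega
      rw [e] at hc
      rcases hc with ha | hm
      · exact absurd ha (descL_not_ascL hd)
      · exact hm
    · omega

end Struct

noncomputable def fwd (p : List ℕ × Finset ℕ) : Σ _ : Finset ℕ, ℕ × (List ℕ × Finset ℕ) :=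
  ⟨(p.1.take (kk p.1 p.2)).toFinset,
    (tt p.2, (p.1.drop (kk p.1 p.2),
      (p.2.filter (fun i => kk p.1 p.2 ≤ i)).image (fun i => i - kk p.1 p.2)))⟩

noncomputable def bwd (q : Σ _ : Finset ℕ, ℕ × (List ℕ × Finset ℕ)) : List ℕ × Finset ℕ :=
  (sortDesc q.1 ++ q.2.2.1,
    (Finset.range q.2.1 ∪
      (if q.2.2.1 ≠ [] ∧ q.2.2.1.getD 0 0 < (sortDesc q.1).getD (q.1.card - 1) 0
        then {q.1.card - 1} else ∅)) ∪
      q.2.2.2.image (fun i => i + q.1.card))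

noncomputable def target (V : Finset ℕ) : Finset (Σ _ : Finset ℕ, ℕ × (List ℕ × Finset ℕ)) :=
  (V.powerset.filter (fun T => 2 ≤ T.card)).sigma
    (fun T => (Finset.range (T.card - 1)) ×ˢ OV (V \ T))

/-- All the basic facts about a valid nonempty object. -/
lemma obj_facts {V : Finset ℕ} (hV : 2 ≤ V.card) {l : List ℕ} {S : Finset ℕ}
    (hp : (l, S) ∈ OV V) :
    l.Nodup ∧ l.toFinset = V ∧ l.length = V.card ∧
      (descL l 0 ∧ descL l (l.length - 2) ∧ noDA l ∧ ∀ i ∈ S, ddL l i) := by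
  rw [mem_OV_iff] at hp
  obtain ⟨hnd, htf, hsub, hobj⟩ := hp
  have hlen : l.length = V.card := by rw [← List.toFinset_card_of_nodup hnd, htf]
  refine ⟨hnd, htf, hlen, ?_⟩
  rcases hobj with ⟨he, -⟩ | h
  · rw [he] at hlen; simp at hlen; omega
  · exact h

lemma fwd_mem {V : Finset ℕ} (hV : 2 ≤ V.card) {p : List ℕ × Finset ℕ} (hp : p ∈ OV V) :
    fwd p ∈ target V := by
  obtain ⟨l, S⟩ := p
  obtain ⟨hnd, htf, hlen, h0, hend, hnoDA, hS⟩ := obj_facts hV hp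
  set k := kk l S with hkdef
  have hkle : k ≤ l.length := kk_le hS
  have hk2 : tt S + 2 ≤ k := tt_add_two_le_kk h0 hS
  have htknd : (l.take k).Nodup := (List.take_sublist _ _).nodup hnd
  have htklen : (l.take k).length = k := by rw [List.length_take]; omega
  have hTcard : (l.take k).toFinset.card = k := by
    rw [List.toFinset_card_of_nodup htknd, htklen]
  have hdrnd : (l.drop k).Nodup := (List.drop_sublist _ _).nodup hnd
  have hdrlen : (l.drop k).length = l.length - k := List.length_drop
  have hdisj : List.Disjoint (l.take k) (l.drop k) := by
    have h := hnd
    rw [← List.take_append_drop k l, List.nodup_append] at h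
    exact fun ⦃a⦄ ha hb => h.2.2 a ha a hb rfl
  have hsd : V \ (l.take k).toFinset = (l.drop k).toFinset := by
    ext x
    have hx : x ∈ l ↔ (x ∈ l.take k ∨ x ∈ l.drop k) := by
      conv_lhs => rw [← List.take_append_drop k l]
      exact List.mem_append
    simp only [Finset.mem_sdiff, ← htf, List.mem_toFinset]
    constructor
    · rintro ⟨h1, h2⟩; rcases hx.1 h1 with h | h; exacts [absurd h h2, h]
    · intro h; exact ⟨hx.2 (Or.inr h), fun hc => hdisj hc h⟩
  have hsdcard : (V \ (l.take k).toFinset).card = l.length - k := by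
    rw [hsd, List.toFinset_card_of_nodup hdrnd, hdrlen]
  have hfwd : fwd (l, S) =
      ⟨(l.take k).toFinset, (tt S, (l.drop k,
        (S.filter (fun i => k ≤ i)).image (fun i => i - k)))⟩ := rfl
  rw [hfwd, target, Finset.mem_sigma, Finset.mem_filter, Finset.mem_powerset]
  refine ⟨⟨?_, by show 2 ≤ (l.take k).toFinset.card; omega⟩, ?_⟩
  · intro x hx
    rw [List.mem_toFinset] at hx
    rw [← htf, List.mem_toFinset]
    exact (List.take_sublist _ _).mem hx
  · rw [Finset.mem_product]
    constructor
    · simp only [Finset.mem_range]; omega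
    · rw [mem_OV_iff]
      refine ⟨hdrnd, hsd.symm, ?_, ?_⟩
      · intro i hi
        simp only [Finset.mem_image, Finset.mem_filter] at hi
        obtain ⟨j, ⟨hjS, hjk⟩, rfl⟩ := hi
        have := (hS _ hjS).1.1
        rw [Finset.mem_range, hsdcard]
        omega
      · rcases Nat.eq_or_lt_of_le hkle with he | hlt
        · left
          constructor
          · exact List.drop_eq_nil_of_le (by omega)
          · rw [Finset.eq_empty_iff_forall_notMem]
            intro j hj
            simp only [Finset.mem_image, Finset.mem_filter] at hj
            obtain ⟨i, ⟨hiS, hik⟩, rfl⟩ := hj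
            have := (hS _ hiS).1.1
            omega
        · right
          have hk2m : k + 2 ≤ l.length := kk_add_two_le hend hS hlt
          refine ⟨?_, ?_, ?_, ?_⟩
          · rw [descL_drop hkle, Nat.add_zero]
            exact descL_kk hnd hend hnoDA hS hlt
          · rw [hdrlen, descL_drop hkle, show k + (l.length - k - 2) = l.length - 2 from by omega]
            exact hend
          · intro i hi
            rw [ascL_drop hkle, ascL_drop hkle] at hi
            rw [show k + (i+1) = (k+i) + 1 from by omega] at hi
            exact hnoDA (k + i) hi
          · intro i hi
            simp only [Finset.mem_image, Finset.mem_filter] at hi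
            obtain ⟨j, ⟨hjS, hjk⟩, rfl⟩ := hi
            constructor
            · rw [descL_drop hkle, show k + (j - k) = j from by omega]
              exact (hS _ hjS).1
            · rw [descL_drop hkle, show k + (j - k + 1) = j + 1 from by omega]
              exact (hS _ hjS).2

lemma getD_take {l : List ℕ} {k i : ℕ} (h : i < k) (h2 : i < l.length) :
    (l.take k).getD i 0 = l.getD i 0 := by
  have h3 : i < (l.take k).length := by rw [List.length_take]; omega
  rw [List.getD_eq_getElem _ 0 h3, List.getD_eq_getElem _ 0 h2, List.getElem_take]

lemma drop_ne_nil_iff {l : List ℕ} {k : ℕ} : l.drop k ≠ [] ↔ k < l.length := by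
  constructor
  · intro h
    by_contra hc
    exact h (List.drop_eq_nil_of_le (by omega))
  · intro h hc
    have := congrArg List.length hc
    rw [List.length_drop] at this
    simp at this; omega

lemma bwd_mem {V : Finset ℕ} (hV : 2 ≤ V.card) {q : Σ _ : Finset ℕ, ℕ × (List ℕ × Finset ℕ)}
    (hq : q ∈ target V) : bwd q ∈ OV V := by
  obtain ⟨T, t, l', S'⟩ := q
  rw [target, Finset.mem_sigma, Finset.mem_filter, Finset.mem_powerset, Finset.mem_product] at hq
  obtain ⟨⟨hTV, hT2⟩, ht, hq2⟩ := hq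
  dsimp only at hTV hT2 ht hq2
  rw [Finset.mem_range] at ht
  rw [mem_OV_iff] at hq2
  obtain ⟨hnd', htf', hsub', hobj'⟩ := hq2
  have hclen : (sortDesc T).length = T.card := sortDesc_length
  have hcnd : (sortDesc T).Nodup := sortDesc_nodup
  have hctf : (sortDesc T).toFinset = T := sortDesc_toFinset
  have hcne : sortDesc T ≠ [] := by
    intro h; rw [h] at hclen; simp at hclen; omega
  have hl'len : l'.length = (V \ T).card := by
    rw [← List.toFinset_card_of_nodup hnd', htf']
  have hVcard : (V \ T).card + T.card = V.card := Finset.card_sdiff_add_card_eq_card hTV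
  have hl'cases : l' = [] ∨ 2 ≤ l'.length := by
    rcases hobj' with ⟨h, -⟩ | ⟨hb, -⟩
    · exact Or.inl h
    · exact Or.inr (by have := hb.1; omega)
  have hdisj : List.Disjoint (sortDesc T) l' := by
    intro x hxc hxl'
    have h1 : x ∈ T := by rw [← hctf]; exact List.mem_toFinset.mpr hxc
    have h2 : x ∈ V \ T := by rw [← htf']; exact List.mem_toFinset.mpr hxl'
    rw [Finset.mem_sdiff] at h2; exact h2.2 h1
  have htail0 : l' ≠ [] → descL (sortDesc T ++ l') (sortDesc T).length := by
    intro hne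
    rcases hobj' with ⟨h, -⟩ | ⟨hb, -⟩
    · exact absurd h hne
    · have h3 := descL_append_right (c := sortDesc T) (l' := l') (j := 0)
      rw [Nat.add_zero] at h3
      exact h3.mpr hb
  show (sortDesc T ++ l',
    (Finset.range t ∪
      (if l' ≠ [] ∧ l'.getD 0 0 < (sortDesc T).getD (T.card - 1) 0
        then {T.card - 1} else ∅)) ∪
      S'.image (fun i => i + T.card)) ∈ OV V
  rw [mem_OV_iff]
  refine ⟨List.Nodup.append hcnd hnd' hdisj, ?_, ?_, ?_⟩
  · rw [List.toFinset_append, hctf, htf']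
    exact Finset.union_sdiff_of_subset hTV
  · intro i hi
    rw [Finset.mem_range]
    simp only [Finset.mem_union] at hi
    rcases hi with (hi | hi) | hi
    · rw [Finset.mem_range] at hi; omega
    · split_ifs at hi with hif
      · rw [Finset.mem_singleton] at hi; omega
      · simp at hi
    · simp only [Finset.mem_image] at hi
      obtain ⟨j, hj, rfl⟩ := hi
      have := hsub' hj
      rw [Finset.mem_range] at this
      omega
  · right
    have hstart : descL (sortDesc T ++ l') 0 := by
      rw [descL_append_left (by omega)]
      exact sortDesc_descL (by omega)
    refine ⟨hstart, ?_, ?_, ?_⟩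
    · rcases hl'cases with he | h2
      · subst he
        simp only [List.append_nil]
        exact sortDesc_descL (by omega)
      · rw [List.length_append, hclen,
          show T.card + l'.length - 2 = (sortDesc T).length + (l'.length - 2) from by omega,
          descL_append_right]
        rcases hobj' with ⟨h, -⟩ | ⟨-, hbend, -, -⟩
        · exact absurd h (by intro hh; rw [hh] at h2; simp at h2)
        · exact hbend
    · intro i hia
      obtain ⟨a1, a2⟩ := hia
      have hb1 := a1.1
      rw [List.length_append, hclen] at hb1
      rcases Nat.lt_or_ge i (T.card - 1) with hcase | hcase
      · rw [ascL_append_left (by omega)] at a1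
        exact descL_not_ascL (sortDesc_descL (by omega)) a1
      rcases Nat.eq_or_lt_of_le hcase with hcase2 | hcase2
      · have hkidx : i + 1 = (sortDesc T).length := by omega
        rw [hkidx] at a2
        have hb2 := a2.1
        rw [List.length_append] at hb2
        have hne : l' ≠ [] := by intro h; rw [h] at hb2; simp at hb2
        exact descL_not_ascL (htail0 hne) a2
      · have e1 : i = (sortDesc T).length + (i - T.card) := by omega
        rw [e1, ascL_append_right] at a1
        rw [show i + 1 = (sortDesc T).length + (i - T.card + 1) from by omega,
          ascL_append_right] at a2
        rcases hobj' with ⟨h, -⟩ | ⟨-, -, hnoDA', -⟩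
        · rw [h] at a1; exact absurd a1.1 (by simp)
        · exact hnoDA' (i - T.card) ⟨a1, a2⟩
    · intro i hi
      simp only [Finset.mem_union] at hi
      rcases hi with (hi | hi) | hi
      · rw [Finset.mem_range] at hi
        constructor
        · rw [descL_append_left (by omega)]; exact sortDesc_descL (by omega)
        · rw [descL_append_left (by omega)]; exact sortDesc_descL (by omega)
      · split_ifs at hi with hif
        · rw [Finset.mem_singleton] at hi
          subst hi
          obtain ⟨hne, hlt⟩ := hif
          constructor
          · rw [show T.card - 1 = (sortDesc T).length - 1 from by omega,
              descL_append_junction hcne]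
            refine ⟨hne, ?_⟩
            rwa [show (sortDesc T).length - 1 = T.card - 1 from by omega]
          · rw [show T.card - 1 + 1 = (sortDesc T).length from by omega]
            exact htail0 hne
        · simp at hi
      · simp only [Finset.mem_image] at hi
        obtain ⟨j, hj, rfl⟩ := hi
        rcases hobj' with ⟨-, hS'e⟩ | ⟨-, -, -, hS'⟩
        · rw [hS'e] at hj; simp at hj
        · constructor
          · rw [show j + T.card = (sortDesc T).length + j from by omega, descL_append_right]
            exact (hS' j hj).1
          · rw [show j + T.card + 1 = (sortDesc T).length + (j + 1) from by omega,
              descL_append_right]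
            exact (hS' j hj).2

lemma bwd_fwd {V : Finset ℕ} (hV : 2 ≤ V.card) {p : List ℕ × Finset ℕ} (hp : p ∈ OV V) :
    bwd (fwd p) = p := by
  obtain ⟨l, S⟩ := p
  obtain ⟨hnd, htf, hlen, h0, hend, hnoDA, hS⟩ := obj_facts hV hp
  set k := kk l S with hkdef
  have hkle : k ≤ l.length := kk_le hS
  have hk2 : tt S + 2 ≤ k := tt_add_two_le_kk h0 hS
  have htknd : (l.take k).Nodup := (List.take_sublist _ _).nodup hnd
  have htklen : (l.take k).length = k := by rw [List.length_take]; omega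
  have hTcard : (l.take k).toFinset.card = k := by
    rw [List.toFinset_card_of_nodup htknd, htklen]
  have htksort : (l.take k).Pairwise (· > ·) := by
    apply sorted_of_all_descL
    intro i hi
    rw [htklen] at hi
    have hd := take_descL_of hnd hS (show i + 1 < kk l S from hi)
    exact ⟨by rw [htklen]; omega, by
      rw [getD_take (by omega) (by omega), getD_take (by omega) (by omega)]
      exact hd.2⟩
  have hrec : sortDesc (l.take k).toFinset = l.take k := eq_sortDesc htknd htksort
  show (sortDesc (l.take k).toFinset ++ l.drop k,
    (Finset.range (tt S) ∪
      (if l.drop k ≠ [] ∧ (l.drop k).getD 0 0 <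
          (sortDesc (l.take k).toFinset).getD ((l.take k).toFinset.card - 1) 0
        then {(l.take k).toFinset.card - 1} else ∅)) ∪
      ((S.filter (fun i => k ≤ i)).image (fun i => i - k)).image
        (fun i => i + (l.take k).toFinset.card)) = (l, S)
  rw [hrec, hTcard, List.take_append_drop, Prod.mk.injEq]
  refine ⟨rfl, ?_⟩
  have hcond : (l.drop k ≠ [] ∧ (l.drop k).getD 0 0 < (l.take k).getD (k - 1) 0) ↔
      (k - 1 ∈ S) := by
    rw [mark_kk_sub_one_iff h0 hend hS]
    rw [drop_ne_nil_iff, getD_drop, Nat.add_zero, getD_take (by omega) (by omega)]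
    unfold descL
    constructor
    · rintro ⟨h1, h2⟩
      exact ⟨h1, by rw [show k - 1 + 1 = k from by omega]; exact ⟨by omega, h2⟩⟩
    · rintro ⟨h1, h2⟩
      rw [show k - 1 + 1 = k from by omega] at h2
      exact ⟨h1, h2.2⟩
  have himg : (((S.filter (fun j => k ≤ j)).image (fun j => j - k)).image (fun j => j + k)) =
      S.filter (fun j => k ≤ j) := by
    ext x
    simp only [Finset.mem_image, Finset.mem_filter]
    constructor
    · rintro ⟨y, ⟨j, ⟨hjS, hjk⟩, rfl⟩, rfl⟩
      rw [Nat.sub_add_cancel hjk]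
      exact ⟨hjS, hjk⟩
    · rintro ⟨hxS, hxk⟩
      exact ⟨x - k, ⟨x, ⟨hxS, hxk⟩, rfl⟩, by omega⟩
  rw [himg]
  by_cases hc : k - 1 ∈ S
  · rw [if_pos (hcond.mpr hc)]
    ext i
    simp only [Finset.mem_union, Finset.mem_range, Finset.mem_singleton, Finset.mem_filter]
    constructor
    · rintro ((hi | hi) | hi)
      · exact tt_mem hi
      · rw [hi]; exact hc
      · exact hi.1
    · intro hi
      rcases mark_cases h0 hS hi with h | h | h
      · exact Or.inl (Or.inl h)
      · exact Or.inl (Or.inr h)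
      · exact Or.inr ⟨hi, h⟩
  · rw [if_neg (fun h => hc (hcond.mp h))]
    ext i
    simp only [Finset.mem_union, Finset.mem_range, Finset.notMem_empty, Finset.mem_filter,
      or_false]
    constructor
    · rintro (hi | hi)
      · exact tt_mem hi
      · exact hi.1
    · intro hi
      rcases mark_cases h0 hS hi with h | h | h
      · exact Or.inl h
      · rw [h] at hi; exact absurd hi hc
      · exact Or.inr ⟨hi, h⟩

lemma fwd_bwd {V : Finset ℕ} (hV : 2 ≤ V.card) {q : Σ _ : Finset ℕ, ℕ × (List ℕ × Finset ℕ)}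
    (hq : q ∈ target V) : fwd (bwd q) = q := by
  obtain ⟨T, t, l', S'⟩ := q
  rw [target, Finset.mem_sigma, Finset.mem_filter, Finset.mem_powerset, Finset.mem_product] at hq
  obtain ⟨⟨hTV, hT2⟩, ht, hq2⟩ := hq
  dsimp only at hTV hT2 ht hq2
  rw [Finset.mem_range] at ht
  rw [mem_OV_iff] at hq2
  obtain ⟨hnd', htf', hsub', hobj'⟩ := hq2
  have hclen : (sortDesc T).length = T.card := sortDesc_length
  have hcnd : (sortDesc T).Nodup := sortDesc_nodup
  have hctf : (sortDesc T).toFinset = T := sortDesc_toFinset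
  have hcne : sortDesc T ≠ [] := by
    intro h; rw [h] at hclen; simp at hclen; omega
  set l := sortDesc T ++ l' with hldef
  set S := (Finset.range t ∪
      (if l' ≠ [] ∧ l'.getD 0 0 < (sortDesc T).getD (T.card - 1) 0
        then {T.card - 1} else ∅)) ∪ S'.image (fun i => i + T.card) with hSdef
  have hlen_l : l.length = T.card + l'.length := by
    rw [hldef, List.length_append, hclen]
  have hSmem : ∀ i, i ∈ S ↔ (i < t ∨
      (i = T.card - 1 ∧ l' ≠ [] ∧ l'.getD 0 0 < (sortDesc T).getD (T.card - 1) 0) ∨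
      (∃ j ∈ S', i = j + T.card)) := by
    intro i
    rw [hSdef]
    simp only [Finset.mem_union, Finset.mem_range, Finset.mem_image]
    constructor
    · rintro ((h | h) | h)
      · exact Or.inl h
      · split_ifs at h with hif
        · rw [Finset.mem_singleton] at h; exact Or.inr (Or.inl ⟨h, hif⟩)
        · simp at h
      · obtain ⟨j, hj, rfl⟩ := h; exact Or.inr (Or.inr ⟨j, hj, rfl⟩)
    · rintro (h | ⟨h1, h2⟩ | ⟨j, hj, rfl⟩)
      · exact Or.inl (Or.inl h)
      · rw [if_pos h2]
        exact Or.inl (Or.inr (by rw [Finset.mem_singleton]; exact h1))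
      · exact Or.inr ⟨j, hj, rfl⟩
  have htt : tt S = t := by
    rw [tt, Nat.find_eq_iff]
    constructor
    · intro h
      rw [hSmem] at h
      rcases h with h | ⟨h1, -⟩ | ⟨j, -, h1⟩ <;> omega
    · intro n hn
      rw [not_not, hSmem]
      exact Or.inl hn
  have hdesc_c : ∀ i, i + 1 < T.card → descL l i := fun i hi => by
    rw [hldef, descL_append_left (show i + 1 < (sortDesc T).length from by omega)]
    exact sortDesc_descL hi
  have hS'nil : l' = [] → S' = ∅ := by
    intro h
    have h1 : V \ T = ∅ := by rw [← htf', h]; simp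
    have h2 := hsub'
    rw [h1, Finset.card_empty, Finset.range_zero, Finset.subset_empty] at h2
    exact h2
  have hkk : kk l S = T.card := by
    rcases em (l' = []) with hnil | hne
    · have hlen2 : l.length = T.card := by rw [hlen_l, hnil]; simp
      rw [kk, dif_neg, hlen2]
      rintro ⟨i, hi, hcut⟩
      rw [htt] at hi
      rcases hcut with ha | hm
      · have hb := ha.1
        rw [hlen2] at hb
        exact descL_not_ascL (hdesc_c i hb) ha
      · rw [hSmem] at hm
        rcases hm with h | ⟨-, h, -⟩ | ⟨j, hj, h⟩
        · omega
        · exact h hnil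
        · rw [hS'nil hnil] at hj; simp at hj
    · have hl'pos : 0 < l'.length := List.length_pos_iff.mpr hne
      have hcutj : cutL l S (T.card - 1) := by
        by_cases hlt : l'.getD 0 0 < (sortDesc T).getD (T.card - 1) 0
        · exact Or.inr ((hSmem _).mpr (Or.inr (Or.inl ⟨rfl, hne, hlt⟩)))
        · refine Or.inl ?_
          rw [hldef, show T.card - 1 = (sortDesc T).length - 1 from by omega,
            ascL_append_junction hcne]
          refine ⟨hne, ?_⟩
          have h1 : (sortDesc T).getD ((sortDesc T).length - 1) 0 ∈ T := by
            rw [List.getD_eq_getElem _ 0 (by omega)]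
            have := List.mem_toFinset.mpr (List.getElem_mem
              (show (sortDesc T).length - 1 < (sortDesc T).length from by omega))
            rwa [hctf] at this
          have h2 : l'.getD 0 0 ∈ V \ T := by
            rw [List.getD_eq_getElem _ 0 (by omega)]
            have := List.mem_toFinset.mpr (List.getElem_mem
              (show 0 < l'.length from hl'pos))
            rwa [htf'] at this
          have hne2 : (sortDesc T).getD ((sortDesc T).length - 1) 0 ≠ l'.getD 0 0 := by
            intro he
            rw [he] at h1
            exact (Finset.mem_sdiff.mp h2).2 h1
          rw [show (sortDesc T).length - 1 = T.card - 1 from by omega] at hne2 ⊢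
          omega
      have hex : ∃ i, tt S ≤ i ∧ cutL l S i :=
        ⟨T.card - 1, by rw [htt]; omega, hcutj⟩
      rw [kk, dif_pos hex]
      have hfind : Nat.find hex = T.card - 1 := by
        rw [Nat.find_eq_iff]
        refine ⟨⟨by rw [htt]; omega, hcutj⟩, fun n hn => ?_⟩
        rintro ⟨hn1, hcut⟩
        rw [htt] at hn1
        rcases hcut with ha | hm
        · exact descL_not_ascL (hdesc_c n (by omega)) ha
        · rw [hSmem] at hm
          rcases hm with h | ⟨h, -⟩ | ⟨j, -, h⟩ <;> omega
      rw [hfind]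
      omega
  have hbwd : bwd ⟨T, (t, (l', S'))⟩ = (l, S) := rfl
  have hfwd : fwd (l, S) = ⟨(l.take (kk l S)).toFinset, (tt S, (l.drop (kk l S),
      (S.filter (fun i => kk l S ≤ i)).image (fun i => i - kk l S)))⟩ := rfl
  rw [hbwd, hfwd, hkk, htt]
  have htake : l.take T.card = sortDesc T := by
    rw [hldef]; exact List.take_left' hclen
  have hdrop : l.drop T.card = l' := by
    rw [hldef]; exact List.drop_left' hclen
  have hmark : (S.filter (fun i => T.card ≤ i)).image (fun i => i - T.card) = S' := by
    ext x
    simp only [Finset.mem_image, Finset.mem_filter]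
    constructor
    · rintro ⟨y, ⟨hyS, hyk⟩, rfl⟩
      rw [hSmem] at hyS
      rcases hyS with h | ⟨h, -⟩ | ⟨j, hj, rfl⟩
      · omega
      · omega
      · rwa [Nat.add_sub_cancel]
    · intro hx
      exact ⟨x + T.card, ⟨(hSmem _).mpr (Or.inr (Or.inr ⟨x, hx, rfl⟩)), by omega⟩,
        by rw [Nat.add_sub_cancel]⟩
  rw [htake, hctf, hdrop, hmark]

lemma card_OV_empty : (OV ∅).card = 1 := by
  have : OV ∅ = {([], ∅)} := by
    ext ⟨l, S⟩
    simp only [mem_OV_iff, Finset.mem_singleton, Prod.mk.injEq, Finset.card_empty,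
      Finset.range_zero, Finset.subset_empty, List.toFinset_eq_empty_iff]
    constructor
    · rintro ⟨-, h2, h3, -⟩; exact ⟨h2, h3⟩
    · rintro ⟨h1, h2⟩; subst h1; subst h2
      exact ⟨List.nodup_nil, rfl, rfl, Or.inl ⟨rfl, rfl⟩⟩
  rw [this, Finset.card_singleton]

lemma card_OV_one {V : Finset ℕ} (hV : V.card = 1) : (OV V).card = 0 := by
  rw [Finset.card_eq_zero]
  ext ⟨l, S⟩
  simp only [mem_OV_iff, Finset.notMem_empty, iff_false, not_and]
  intro h1 h2 _ h4
  have hlen : l.length = 1 := by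
    rw [← List.toFinset_card_of_nodup h1, h2, hV]
  rcases h4 with ⟨he, -⟩ | ⟨⟨hb, -⟩, -⟩
  · rw [he] at hlen; simp at hlen
  · omega

/-! ### derangement identities -/

lemma ascFactorial_eq {n k : ℕ} (h : k ≤ n) :
    Nat.ascFactorial (k + 1) (n - k) = n.choose (n - k) * (n - k).factorial := by
  have h1 : k.factorial * Nat.ascFactorial (k + 1) (n - k) = n.factorial := by
    have := Nat.factorial_mul_ascFactorial k (n - k)
    rwa [Nat.add_sub_cancel' h] at this
  have h2 : n.choose (n - k) * (n - k).factorial * k.factorial = n.factorial := by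
    have := Nat.choose_mul_factorial_mul_factorial (Nat.sub_le n k)
    rwa [Nat.sub_sub_self h] at this
  have hk : 0 < k.factorial := Nat.factorial_pos k
  refine Nat.eq_of_mul_eq_mul_left hk ?_
  rw [h1, ← h2]; ring

lemma choose_mul_choose {n j i : ℕ} (hij : i ≤ j) (hjn : j ≤ n) :
    n.choose j * j.choose i = n.choose i * (n - i).choose (j - i) := by
  have e1 : j.choose i * i.factorial * (j-i).factorial = j.factorial :=
    Nat.choose_mul_factorial_mul_factorial hij
  have e2 : n.choose j * j.factorial * (n-j).factorial = n.factorial :=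
    Nat.choose_mul_factorial_mul_factorial hjn
  have h1 : n.choose j * j.choose i * (i.factorial * (j - i).factorial * (n - j).factorial)
      = n.factorial := by rw [← e2, ← e1]; ring
  have e3 : (n-i).choose (j-i) * (j-i).factorial * ((n-i)-(j-i)).factorial = (n-i).factorial :=
    Nat.choose_mul_factorial_mul_factorial (by omega)
  have e4 : (n-i)-(j-i) = n - j := by omega
  rw [e4] at e3
  have e5 : n.choose i * i.factorial * (n-i).factorial = n.factorial :=
    Nat.choose_mul_factorial_mul_factorial (le_trans hij hjn)
  have h2 : n.choose i * (n - i).choose (j - i) *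
      (i.factorial * (j - i).factorial * (n - j).factorial) = n.factorial := by
    rw [← e5, ← e3]; ring
  have hpos : 0 < i.factorial * (j - i).factorial * (n - j).factorial := by positivity
  exact Nat.eq_of_mul_eq_mul_right hpos (h1.trans h2.symm)

lemma numDerangements_eq_int_sum (n : ℕ) :
    (numDerangements n : ℤ) =
      ∑ i ∈ Finset.range (n+1), (-1 : ℤ)^(n-i) * (n.choose i * i.factorial) := by
  rw [numDerangements_sum, ← Finset.sum_range_reflect]
  refine Finset.sum_congr rfl (fun i hi => ?_)
  rw [Finset.mem_range] at hi
  have h : i ≤ n := by omega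
  rw [show n + 1 - 1 - i = n - i from by omega, Nat.sub_sub_self h]
  have e := ascFactorial_eq (show n - i ≤ n from Nat.sub_le n i)
  rw [Nat.sub_sub_self h] at e
  rw [e]; push_cast; ring

lemma sum_choose_numDerangements (n : ℕ) :
    ∑ j ∈ Finset.range (n+1), (n.choose j : ℤ) * numDerangements j = n.factorial := by
  have step1 : ∀ j ∈ Finset.range (n+1), (n.choose j : ℤ) * numDerangements j
      = ∑ i ∈ Finset.range (n+1),
          (if i ≤ j then (-1:ℤ)^(j-i) * (n.choose j * (j.choose i * i.factorial)) else 0) := by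
    intro j hj
    rw [Finset.mem_range] at hj
    have hfe : (Finset.range (n+1)).filter (fun i => i ≤ j) = Finset.range (j+1) := by
      ext x; simp only [Finset.mem_filter, Finset.mem_range]; omega
    rw [← Finset.sum_filter, hfe, numDerangements_eq_int_sum, Finset.mul_sum]
    refine Finset.sum_congr rfl (fun i hi => ?_)
    push_cast
    ring
  rw [Finset.sum_congr rfl step1, Finset.sum_comm]
  have inner : ∀ i ∈ Finset.range (n+1), (∑ j ∈ Finset.range (n+1),
      if i ≤ j then (-1:ℤ)^(j-i) * (n.choose j * (j.choose i * i.factorial)) else 0)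
      = if i = n then (n.factorial : ℤ) else 0 := by
    intro i hi
    rw [Finset.mem_range] at hi
    have hin : i ≤ n := by omega
    have hfe : (Finset.range (n+1)).filter (fun j => i ≤ j) = Finset.Icc i n := by
      ext x; simp only [Finset.mem_filter, Finset.mem_range, Finset.mem_Icc]; omega
    rw [← Finset.sum_filter, hfe]
    have hmap : Finset.Icc i n = (Finset.range (n - i + 1)).map (addRightEmbedding i) := by
      have h1 : Finset.range (n - i + 1) = Finset.Icc 0 (n - i) := by
        ext x; simp only [Finset.mem_range, Finset.mem_Icc]; omega
      rw [h1, Finset.map_add_right_Icc, Nat.zero_add, Nat.sub_add_cancel hin]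
    rw [hmap, Finset.sum_map]
    have hterm : ∀ d ∈ Finset.range (n - i + 1),
        ((-1:ℤ)^(addRightEmbedding i d - i) *
          (n.choose (addRightEmbedding i d) * ((addRightEmbedding i d).choose i * i.factorial)))
        = ((n.choose i : ℤ) * i.factorial) * ((-1:ℤ)^d * (n-i).choose d) := by
      intro d hd
      rw [Finset.mem_range] at hd
      have he : (addRightEmbedding i) d = d + i := rfl
      rw [he, show d + i - i = d from by omega]
      have hcc : n.choose (d + i) * (d + i).choose i = n.choose i * (n - i).choose d := by
        have := choose_mul_choose (show i ≤ d + i from by omega) (show d + i ≤ n from by omega)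
        rwa [show d + i - i = d from by omega] at this
      have hcc' : (n.choose (d+i) : ℤ) * ((d+i).choose i) = (n.choose i : ℤ) * ((n-i).choose d) := by
        exact_mod_cast hcc
      push_cast
      linear_combination ((i.factorial : ℤ) * (-1:ℤ)^d) * hcc'
    rw [Finset.sum_congr rfl hterm, ← Finset.mul_sum, Int.alternating_sum_range_choose]
    by_cases hey : i = n
    · rw [if_pos hey, if_pos (by omega), hey, Nat.choose_self]
      push_cast; ring
    · rw [if_neg hey, if_neg (by omega), mul_zero]
  rw [Finset.sum_congr rfl inner, Finset.sum_ite_eq' (Finset.range (n+1)) n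
    (fun _ => (n.factorial : ℤ)), if_pos (by rw [Finset.mem_range]; omega)]

lemma sum_choose_numDerangements' (n : ℕ) :
    ∑ k ∈ Finset.range (n+1), (n.choose k : ℤ) * numDerangements (n - k) = n.factorial := by
  rw [← sum_choose_numDerangements n, ← Finset.sum_range_reflect]
  refine Finset.sum_congr rfl (fun k hk => ?_)
  rw [Finset.mem_range] at hk
  rw [show n + 1 - 1 - k = n - k from by omega, Nat.sub_sub_self (by omega : k ≤ n),
    Nat.choose_symm (by omega : k ≤ n)]

lemma numDerangements_rec (n : ℕ) (hn : 1 ≤ n) :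
    (numDerangements n : ℤ) =
      ∑ k ∈ Finset.Icc 2 n, (n.choose k : ℤ) * (k - 1) * numDerangements (n - k) := by
  rcases Nat.eq_or_lt_of_le hn with h1 | h2
  · rw [← h1]; simp [numDerangements]
  have hn2 : 2 ≤ n := h2
  have hsplit : Finset.range (n+1) = insert 0 (insert 1 (Finset.Icc 2 n)) := by
    ext x; simp only [Finset.mem_insert, Finset.mem_Icc, Finset.mem_range]; omega
  have hA := sum_choose_numDerangements' n
  rw [hsplit, Finset.sum_insert (by simp), Finset.sum_insert (by simp)] at hA
  simp only [Nat.choose_zero_right, Nat.choose_one_right, Nat.sub_zero, Nat.cast_one,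
    one_mul] at hA
  have hA1 : ∑ k ∈ Finset.Icc 2 n, (n.choose k : ℤ) * k * numDerangements (n - k)
      = (n : ℤ) * ((n-1).factorial - numDerangements (n-1)) := by
    have hterm : ∀ k ∈ Finset.Icc 2 n, (n.choose k : ℤ) * k * numDerangements (n - k)
        = (n : ℤ) * (((n-1).choose (k-1) : ℤ) * numDerangements (n - k)) := by
      intro k hk
      rw [Finset.mem_Icc] at hk
      have h3 : (n - 1) + 1 = n := by omega
      have h4 : (k - 1) + 1 = k := by omega
      have h5 := Nat.add_one_mul_choose_eq (n-1) (k-1)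
      rw [h3, h4] at h5
      have hz : ((n : ℤ)) * ((n-1).choose (k-1) : ℤ) = (n.choose k : ℤ) * k := by
        exact_mod_cast h5
      rw [← mul_assoc, ← hz]
    rw [Finset.sum_congr rfl hterm, ← Finset.mul_sum]
    congr 1
    have hmap2 : Finset.Icc 2 n = (Finset.Icc 1 (n-1)).map (addRightEmbedding 1) := by
      rw [Finset.map_add_right_Icc]; congr 1; omega
    rw [hmap2, Finset.sum_map]
    have hterm2 : ∀ j ∈ Finset.Icc 1 (n-1),
        (((n-1).choose ((addRightEmbedding 1) j - 1) : ℤ) *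
          numDerangements (n - (addRightEmbedding 1) j))
        = ((n-1).choose j : ℤ) * numDerangements ((n-1) - j) := by
      intro j hj
      have he : (addRightEmbedding 1) j = j + 1 := rfl
      rw [he, show j + 1 - 1 = j from by omega, show n - (j+1) = (n-1) - j from by omega]
    rw [Finset.sum_congr rfl hterm2]
    have hB := sum_choose_numDerangements' (n-1)
    have hsplit2 : Finset.range ((n-1)+1) = insert 0 (Finset.Icc 1 (n-1)) := by
      ext x; simp only [Finset.mem_insert, Finset.mem_Icc, Finset.mem_range]; omega
    rw [hsplit2, Finset.sum_insert (by simp)] at hB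
    simp only [Nat.choose_zero_right, Nat.sub_zero, Nat.cast_one, one_mul] at hB
    linarith [hB]
  have hsum : ∑ k ∈ Finset.Icc 2 n, (n.choose k : ℤ) * (k - 1) * numDerangements (n - k)
      = (∑ k ∈ Finset.Icc 2 n, (n.choose k : ℤ) * k * numDerangements (n - k))
        - (∑ k ∈ Finset.Icc 2 n, (n.choose k : ℤ) * numDerangements (n - k)) := by
    rw [← Finset.sum_sub_distrib]
    exact Finset.sum_congr rfl (fun k hk => by ring)
  rw [hsum, hA1]
  have hfact : (n : ℤ) * ((n-1).factorial : ℤ) = (n.factorial : ℤ) := by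
    exact_mod_cast Nat.mul_factorial_pred (show n ≠ 0 by omega)
  rw [mul_sub]
  linarith [hA]

/-! ### main counting result -/

lemma card_OV_rec {V : Finset ℕ} (hV : 2 ≤ V.card) :
    (OV V).card = ∑ T ∈ V.powerset.filter (fun T => 2 ≤ T.card),
      (T.card - 1) * (OV (V \ T)).card := by
  have h1 : (OV V).card = (target V).card :=
    Finset.card_bij' (fun p _ => fwd p) (fun q _ => bwd q)
      (fun p hp => fwd_mem hV hp) (fun q hq => bwd_mem hV hq)
      (fun p hp => bwd_fwd hV hp) (fun q hq => fwd_bwd hV hq)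
  rw [h1, target, Finset.card_sigma]
  exact Finset.sum_congr rfl (fun T _ => by rw [Finset.card_product, Finset.card_range])

lemma final_sum (n : ℕ) (hn : 2 ≤ n) :
    ∑ k ∈ Finset.range (n+1),
      n.choose k * (if 2 ≤ k then (k - 1) * numDerangements (n - k) else 0)
      = numDerangements n := by
  have hite : ∀ k ∈ Finset.range (n+1),
      n.choose k * (if 2 ≤ k then (k - 1) * numDerangements (n - k) else 0)
      = if 2 ≤ k then n.choose k * ((k - 1) * numDerangements (n - k)) else 0 := by
    intro k _
    split_ifs <;> simp
  have h1 : ∑ k ∈ Finset.range (n+1),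
      n.choose k * (if 2 ≤ k then (k - 1) * numDerangements (n - k) else 0)
      = ∑ k ∈ Finset.Icc 2 n, n.choose k * ((k - 1) * numDerangements (n - k)) := by
    rw [Finset.sum_congr rfl hite, ← Finset.sum_filter]
    congr 1
    ext x; simp only [Finset.mem_filter, Finset.mem_range, Finset.mem_Icc]; omega
  rw [h1]
  have h2 := numDerangements_rec n (by omega)
  have hcast : (Nat.cast (∑ k ∈ Finset.Icc 2 n, n.choose k * ((k - 1) * numDerangements (n - k))) : ℤ)
      = ∑ k ∈ Finset.Icc 2 n, (n.choose k : ℤ) * ((k : ℤ) - 1) * (numDerangements (n - k) : ℤ) := by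
    push_cast
    refine Finset.sum_congr rfl (fun k hk => ?_)
    rw [Finset.mem_Icc] at hk
    rw [Nat.cast_sub (show 1 ≤ k by omega)]
    ring
  exact Nat.cast_injective (R := ℤ) (hcast.trans h2.symm)

theorem card_OV (V : Finset ℕ) : (OV V).card = numDerangements V.card := by
  generalize hn : V.card = n
  induction n using Nat.strong_induction_on generalizing V with
  | _ n ih =>
  rcases Nat.lt_or_ge n 2 with h2 | h2
  · interval_cases n
    · rw [Finset.card_eq_zero] at hn
      subst hn
      rw [card_OV_empty]
      exact numDerangements_zero.symm
    · rw [card_OV_one hn]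
      exact numDerangements_one.symm
  · have hV : 2 ≤ V.card := by omega
    rw [card_OV_rec hV]
    have hstep : ∀ T ∈ V.powerset.filter (fun T => 2 ≤ T.card),
        (T.card - 1) * (OV (V \ T)).card = (T.card - 1) * numDerangements (n - T.card) := by
      intro T hT
      rw [Finset.mem_filter, Finset.mem_powerset] at hT
      obtain ⟨hTV, hT2⟩ := hT
      have hcard : (V \ T).card = n - T.card := by
        rw [Finset.card_sdiff_of_subset hTV, hn]
      rw [ih (n - T.card) (by
        have : T.card ≤ n := by rw [← hn]; exact Finset.card_le_card hTV
        omega) _ hcard]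
    rw [Finset.sum_congr rfl hstep, Finset.sum_filter, Finset.sum_powerset]
    have hinner : ∀ k ∈ Finset.range (V.card + 1),
        (∑ T ∈ Finset.powersetCard k V,
          if 2 ≤ T.card then (T.card - 1) * numDerangements (n - T.card) else 0)
        = (n.choose k) * (if 2 ≤ k then (k - 1) * numDerangements (n - k) else 0) := by
      intro k _
      have hT : ∀ T ∈ Finset.powersetCard k V,
          (if 2 ≤ T.card then (T.card - 1) * numDerangements (n - T.card) else 0)
          = (if 2 ≤ k then (k - 1) * numDerangements (n - k) else 0) := by
        intro T hT
        rw [(Finset.mem_powersetCard.mp hT).2]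
      rw [Finset.sum_congr rfl hT, Finset.sum_const, Finset.card_powersetCard, hn, smul_eq_mul]
    rw [Finset.sum_congr rfl hinner, hn]
    exact final_sum n h2

/-! ### bridge from permutations to words -/

def wordOf {n : ℕ} (π : Equiv.Perm (Fin n)) : List ℕ := List.ofFn (fun i : Fin n => (π i : ℕ))

lemma wordOf_length {n : ℕ} (π : Equiv.Perm (Fin n)) : (wordOf π).length = n := by
  simp [wordOf]

lemma wordOf_getD {n : ℕ} (π : Equiv.Perm (Fin n)) {i : ℕ} (h : i < n) :
    (wordOf π).getD i 0 = π ⟨i, h⟩ := by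
  rw [wordOf, List.getD_eq_getElem _ 0 (by simpa using h), List.getElem_ofFn]

lemma descL_wordOf_iff {n : ℕ} (π : Equiv.Perm (Fin n)) (i : ℕ) :
    descL (wordOf π) i ↔ Desc π i := by
  constructor
  · rintro ⟨h1, h2⟩
    rw [wordOf_length] at h1
    rw [wordOf_getD π h1, wordOf_getD π (by omega)] at h2
    exact ⟨h1, h2⟩
  · rintro ⟨h1, h2⟩
    refine ⟨by rw [wordOf_length]; omega, ?_⟩
    rw [wordOf_getD π h1, wordOf_getD π (by omega)]
    exact h2

lemma ascL_wordOf_iff {n : ℕ} (π : Equiv.Perm (Fin n)) (i : ℕ) :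
    ascL (wordOf π) i ↔ Asc π i := by
  constructor
  · rintro ⟨h1, h2⟩
    rw [wordOf_length] at h1
    rw [wordOf_getD π h1, wordOf_getD π (by omega)] at h2
    exact ⟨h1, h2⟩
  · rintro ⟨h1, h2⟩
    refine ⟨by rw [wordOf_length]; omega, ?_⟩
    rw [wordOf_getD π h1, wordOf_getD π (by omega)]
    exact h2

lemma wordOf_nodup {n : ℕ} (π : Equiv.Perm (Fin n)) : (wordOf π).Nodup := by
  rw [wordOf, List.nodup_ofFn]
  exact Fin.val_injective.comp π.injective

lemma wordOf_toFinset {n : ℕ} (π : Equiv.Perm (Fin n)) :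
    (wordOf π).toFinset = Finset.range n := by
  ext x
  simp only [wordOf, List.mem_toFinset, List.mem_ofFn, Finset.mem_range]
  constructor
  · rintro ⟨i, rfl⟩; exact (π i).2
  · intro hx; exact ⟨π.symm ⟨x, hx⟩, by simp⟩

theorem alphaBB_eq_card_OV (n : ℕ) (hn : 2 ≤ n) :
    alphaBB n = (OV (Finset.range n)).card := by
  have h1 : alphaBB n = ((Finset.univ.filter
      (fun π : Equiv.Perm (Fin n) => NoDoubleAsc π ∧ Desc π 0 ∧ Desc π (n - 2))).sigma
      (fun π => ((Finset.range n).filter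
        (fun i => Desc π i ∧ Desc π (i + 1))).powerset)).card := by
    rw [Finset.card_sigma, alphaBB]
    exact Finset.sum_congr rfl (fun π _ => by rw [Finset.card_powerset, dd])
  rw [h1]
  refine Finset.card_bij (fun q _ => (wordOf q.1, q.2)) ?_ ?_ ?_
  · rintro ⟨π, S⟩ hq
    rw [Finset.mem_sigma, Finset.mem_filter, Finset.mem_powerset] at hq
    obtain ⟨⟨-, hnoDA, h0, hend⟩, hSsub⟩ := hq
    dsimp only at hSsub ⊢
    rw [mem_OV_iff]
    refine ⟨wordOf_nodup π, wordOf_toFinset π, ?_, ?_⟩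
    · intro i hi
      have := hSsub hi
      rw [Finset.mem_filter] at this
      rw [Finset.card_range]
      exact this.1
    · right
      refine ⟨(descL_wordOf_iff π 0).mpr h0, ?_, ?_, ?_⟩
      · rw [wordOf_length]
        exact (descL_wordOf_iff π (n-2)).mpr hend
      · intro i hi
        obtain ⟨a1, a2⟩ := hi
        rw [ascL_wordOf_iff] at a1 a2
        exact hnoDA i ⟨a1, a2⟩
      · intro i hi
        have := hSsub hi
        rw [Finset.mem_filter] at this
        exact ⟨(descL_wordOf_iff π i).mpr this.2.1, (descL_wordOf_iff π (i+1)).mpr this.2.2⟩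
  · rintro ⟨π, S⟩ hq ⟨π', S'⟩ hq' he
    rw [Prod.mk.injEq] at he
    obtain ⟨he1, he2⟩ := he
    have hπ : π = π' := by
      apply Equiv.ext
      intro i
      have : (wordOf π).getD i 0 = (wordOf π').getD i 0 := by rw [he1]
      rw [wordOf_getD π i.2, wordOf_getD π' i.2] at this
      exact Fin.ext (by simpa using this)
    subst hπ; subst he2; rfl
  · rintro ⟨l, S⟩ hq
    rw [mem_OV_iff] at hq
    obtain ⟨hnd, htf, hsub, hobj⟩ := hq
    have hlen : l.length = n := by
      rw [← List.toFinset_card_of_nodup hnd, htf, Finset.card_range]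
    have hbound : ∀ i, i < n → l.getD i 0 < n := by
      intro i h
      have hmem : l.getD i 0 ∈ l := by
        rw [List.getD_eq_getElem _ 0 (by omega)]
        exact List.getElem_mem _
      have : l.getD i 0 ∈ Finset.range n := by
        rw [← htf]; exact List.mem_toFinset.mpr hmem
      simpa using this
    have hobj2 : descL l 0 ∧ descL l (l.length - 2) ∧ noDA l ∧ ∀ i ∈ S, ddL l i := by
      rcases hobj with ⟨he, -⟩ | h
      · rw [he] at hlen; simp at hlen; omega
      · exact h
    obtain ⟨h0, hend, hnoDA, hS⟩ := hobj2
    set f : Fin n → Fin n := fun i => ⟨l.getD i 0, hbound i i.2⟩ with hf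
    have hinj : Function.Injective f := by
      intro a b hab
      have hv : l.getD (a : ℕ) 0 = l.getD (b : ℕ) 0 := congrArg Fin.val hab
      rw [List.getD_eq_getElem _ 0 (show (a:ℕ) < l.length by rw [hlen]; exact a.2),
        List.getD_eq_getElem _ 0 (show (b:ℕ) < l.length by rw [hlen]; exact b.2)] at hv
      exact Fin.ext (hnd.getElem_inj_iff.mp hv)
    have hbij : Function.Bijective f := Finite.injective_iff_bijective.mp hinj
    set π : Equiv.Perm (Fin n) := Equiv.ofBijective f hbij with hπ
    have hword : wordOf π = l := by
      apply List.ext_getElem (by rw [wordOf_length, hlen])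
      intro i h1 h2
      have h1' : i < n := by rw [wordOf_length] at h1; exact h1
      rw [← List.getD_eq_getElem (wordOf π) 0 h1, ← List.getD_eq_getElem l 0 h2,
        wordOf_getD π h1']
      rfl
    refine ⟨⟨π, S⟩, ?_, by show (wordOf π, S) = (l, S); rw [hword]⟩
    rw [Finset.mem_sigma, Finset.mem_filter, Finset.mem_powerset]
    refine ⟨⟨Finset.mem_univ _, ?_, ?_, ?_⟩, ?_⟩
    · intro i hi
      obtain ⟨a1, a2⟩ := hi
      rw [← ascL_wordOf_iff, hword] at a1 a2
      exact hnoDA i ⟨a1, a2⟩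
    · rw [← descL_wordOf_iff, hword]; exact h0
    · rw [← descL_wordOf_iff, hword]
      rw [hlen] at hend
      exact hend
    · intro i hi
      have hdd := hS i hi
      rw [Finset.mem_filter, Finset.mem_range]
      have hb := hdd.1.1
      refine ⟨by omega, ?_, ?_⟩
      · rw [← descL_wordOf_iff, hword]; exact hdd.1
      · rw [← descL_wordOf_iff, hword]; exact hdd.2

/-! ### analytic part -/

theorem numDerangements_eq_floor (n : ℕ) (hn : 2 ≤ n) :
    (numDerangements n : ℤ) = ⌊(n.factorial : ℝ) / Real.exp 1 + 1 / 2⌋ := by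
  have hD : (numDerangements n : ℝ) / n.factorial
      = ∑ k ∈ Finset.range (n + 1), (-1 : ℝ)^k / k.factorial := by
    rw [← Int.cast_natCast, numDerangements_sum]
    push_cast
    rw [Finset.sum_div]
    refine Finset.sum_congr rfl ?_
    intro k hk
    have h_le : k ≤ n := Finset.mem_range_succ_iff.mp hk
    rw [Nat.ascFactorial_eq_div, add_tsub_cancel_of_le h_le]
    push_cast [Nat.factorial_dvd_factorial h_le]
    field_simp [Nat.factorial_ne_zero]
  have hfacpos : (0:ℝ) < (n.factorial : ℝ) := by exact_mod_cast Nat.factorial_pos n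
  have hDval : (numDerangements n : ℝ)
      = n.factorial * ∑ k ∈ Finset.range (n + 1), (-1 : ℝ)^k / k.factorial := by
    rw [mul_comm]
    exact (div_eq_iff hfacpos.ne').mp hD
  have hb := Real.exp_bound (x := (-1:ℝ)) (by norm_num) (n := n+1) (by omega)
  have habs : |(-1:ℝ)| = 1 := by norm_num
  rw [habs, one_pow, one_mul] at hb
  -- hb : |exp (-1) - Σ_{m<n+1} (-1)^m/m!| ≤ (n+2)/((n+1)! * (n+1))
  have hsum_eq : ∑ m ∈ Finset.range (n+1), (-1:ℝ)^m / m.factorial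
      = ∑ k ∈ Finset.range (n + 1), (-1 : ℝ)^k / k.factorial := rfl
  have hkey : |(n.factorial : ℝ) * Real.exp (-1) - numDerangements n| ≤ 4/9 := by
    have h1 : (n.factorial : ℝ) * Real.exp (-1) - numDerangements n
        = n.factorial * (Real.exp (-1) - ∑ k ∈ Finset.range (n + 1), (-1 : ℝ)^k / k.factorial) := by
      rw [hDval]; ring
    rw [h1, abs_mul, abs_of_pos hfacpos]
    have hfacsucc : ((n+1).factorial : ℝ) = ((n:ℝ)+1) * n.factorial := by
      have := Nat.factorial_succ n
      push_cast [this]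
      ring
    have hb' := hb
    push_cast at hb'
    rw [hfacsucc] at hb'
    have h1p : ((n:ℝ)+1) ≠ 0 := by positivity
    have hn2 : (2:ℝ) ≤ (n:ℝ) := by exact_mod_cast hn
    calc (n.factorial : ℝ) *
        |Real.exp (-1) - ∑ k ∈ Finset.range (n + 1), (-1 : ℝ)^k / k.factorial|
        ≤ (n.factorial : ℝ) * (((n:ℝ) + 1 + 1) / (((n:ℝ)+1) * (n.factorial:ℝ) * ((n:ℝ)+1))) :=
          mul_le_mul_of_nonneg_left hb' hfacpos.le
      _ = ((n:ℝ)+2) / (((n:ℝ)+1) * ((n:ℝ)+1)) := by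
          field_simp
          ring
      _ ≤ 4/9 := by
          rw [div_le_div_iff₀ (by positivity) (by norm_num)]
          nlinarith
  have hexp : (n.factorial : ℝ) / Real.exp 1 = n.factorial * Real.exp (-1) := by
    rw [Real.exp_neg]
    ring
  rw [eq_comm, Int.floor_eq_iff]
  have hab := abs_le.mp hkey
  constructor
  · push_cast
    rw [hexp]
    linarith [hab.2]
  · push_cast
    rw [hexp]
    linarith [hab.1]

end AlphaBBAux

/-- For n ≥ 2, α_n(b,b) = ⌊n!/e + 1/2⌋, the nearest integer to n!/e. -/
theorem alphaBB_eq_nearest (n : ℕ) (hn : 2 ≤ n) :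
    (alphaBB n : ℤ) = ⌊(n.factorial : ℝ) / Real.exp 1 + 1 / 2⌋ := by
  rw [AlphaBBAux.alphaBB_eq_card_OV n hn, AlphaBBAux.card_OV,
    ← AlphaBBAux.numDerangements_eq_floor n hn, Finset.card_range]
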